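/- arXiv:math/0202283 — 2 statements merged into one kernel-verified Lean document; each statement's English description precedes it below -/
import Mathlib

section
/- Let 𝒰 and 𝒱 be uniformities on a set S. Then the filter 𝒰 ∘ 𝒱 (generated by compositions U ∘ V with U ∈ 𝒰, V ∈ 𝒱) equals the join uniformity 𝒰 ⊔ 𝒱 if and only if 𝒱 ∘ 𝒰 ≤ 𝒰 ∘ 𝒱 (i.e., every U ∘ V with U ∈ 𝒰, V ∈ 𝒱 contains some V' ∘ U' with U' ∈ 𝒰, V' ∈ 𝒱). -/
/-- A uniformity on `S`, viewed as a filter of binary relations (entourages):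
every entourage contains the diagonal, entourages are closed under relational
inverse, and every entourage contains the square of some entourage.
(Upward closure and finite intersections are part of being a filter.) -/
def IsUniformity {S : Type*} (𝒰 : Filter (S × S)) : Prop :=
  (∀ U ∈ 𝒰, ∀ x : S, (x, x) ∈ U) ∧
  (∀ U ∈ 𝒰, {p : S × S | (p.2, p.1) ∈ U} ∈ 𝒰) ∧
  (∀ U ∈ 𝒰, ∃ V ∈ 𝒰, SetRel.comp V V ⊆ U)

/-- The filter of binary relations on `S` with base `{U ○ V | U ∈ F, V ∈ G}`. -/
def relFilterComp {S : Type*} (F G : Filter (S × S)) : Filter (S × S) where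
  sets := {W | ∃ U ∈ F, ∃ V ∈ G, SetRel.comp U V ⊆ W}
  univ_sets := ⟨Set.univ, F.univ_sets, Set.univ, G.univ_sets, Set.subset_univ _⟩
  sets_of_superset := by
    rintro W W' ⟨U, hU, V, hV, h⟩ hWW'
    exact ⟨U, hU, V, hV, h.trans hWW'⟩
  inter_sets := by
    rintro W W' ⟨U, hU, V, hV, h⟩ ⟨U', hU', V', hV', h'⟩
    refine ⟨U ∩ U', F.inter_sets hU hU', V ∩ V', G.inter_sets hV hV', ?_⟩
    rintro ⟨x, z⟩ ⟨y, hy1, hy2⟩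
    exact ⟨h ⟨y, hy1.1, hy2.1⟩, h' ⟨y, hy1.2, hy2.2⟩⟩

lemma mem_relFilterComp {S : Type*} {F G : Filter (S × S)} {s : Set (S × S)} :
    s ∈ relFilterComp F G ↔ ∃ U ∈ F, ∃ V ∈ G, SetRel.comp U V ⊆ s := Iff.rfl

lemma compRel_rev {S : Type*} {U V s : Set (S × S)} (h : SetRel.comp U V ⊆ s) :
    SetRel.comp {p : S × S | (p.2, p.1) ∈ V} {p : S × S | (p.2, p.1) ∈ U} ⊆
      {p : S × S | (p.2, p.1) ∈ s} := by
  rintro ⟨x, y⟩ ⟨z, hz1, hz2⟩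
  exact h ⟨z, hz2, hz1⟩

/-- For uniformities `𝒰`, `𝒱` on a set `S` (filters ordered by reverse
inclusion, which is the order on `Filter`), the filter `𝒰 ∘ 𝒱` is the join
`𝒰 ⊔ 𝒱` in the poset of uniformities (the least uniformity above both) if and
only if `𝒱 ∘ 𝒰 ≤ 𝒰 ∘ 𝒱`. -/
theorem stmt1 {S : Type*} (𝒰 𝒱 : Filter (S × S))
    (hU : IsUniformity 𝒰) (hV : IsUniformity 𝒱) :
    IsLeast {𝒲 : Filter (S × S) | IsUniformity 𝒲 ∧ 𝒰 ≤ 𝒲 ∧ 𝒱 ≤ 𝒲}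
        (relFilterComp 𝒰 𝒱) ↔
      relFilterComp 𝒱 𝒰 ≤ relFilterComp 𝒰 𝒱 := by
  constructor
  · rintro ⟨⟨⟨-, hsymm, -⟩, -, -⟩, -⟩ s hs
    obtain ⟨U', hU', V', hV', h'⟩ :=
      mem_relFilterComp.mp (hsymm s hs)
    refine mem_relFilterComp.mpr
      ⟨_, hV.2.1 V' hV', _, hU.2.1 U' hU', ?_⟩
    rintro ⟨x, y⟩ ⟨z, hz1, hz2⟩
    have : (y, x) ∈ SetRel.comp U' V' := ⟨z, hz2, hz1⟩
    exact h' this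
  · intro h
    -- the two composition filters coincide
    have h' : ∀ s ∈ relFilterComp 𝒱 𝒰, s ∈ relFilterComp 𝒰 𝒱 := by
      rintro s ⟨V, hVm, U, hUm, hsub⟩
      obtain ⟨B, hB, A, hA, h₂⟩ :=
        mem_relFilterComp.mp (h (mem_relFilterComp.mpr
          ⟨_, hU.2.1 U hUm, _, hV.2.1 V hVm, compRel_rev hsub⟩))
      refine mem_relFilterComp.mpr
        ⟨_, hU.2.1 A hA, _, hV.2.1 B hB, ?_⟩
      rintro ⟨x, y⟩ ⟨z, hz1, hz2⟩
      have : (y, x) ∈ SetRel.comp B A := ⟨z, hz2, hz1⟩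
      exact h₂ this
    constructor
    · refine ⟨⟨?_, ?_, ?_⟩, ?_, ?_⟩
      · -- diagonal
        rintro s ⟨U, hUm, V, hVm, hsub⟩ x
        exact hsub ⟨x, hU.1 U hUm x, hV.1 V hVm x⟩
      · -- symmetry
        rintro s ⟨U, hUm, V, hVm, hsub⟩
        exact h' _ (mem_relFilterComp.mpr
          ⟨_, hV.2.1 V hVm, _, hU.2.1 U hUm, compRel_rev hsub⟩)
      · -- square
        rintro s ⟨U, hUm, V, hVm, hsub⟩
        obtain ⟨U', hU', hUU⟩ := hU.2.2 U hUm
        obtain ⟨V', hV', hVV⟩ := hV.2.2 V hVm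
        obtain ⟨B, hB, A, hA, hBA⟩ :=
          mem_relFilterComp.mp (h (mem_relFilterComp.mpr
            ⟨U', hU', V', hV', Set.Subset.refl _⟩))
        refine ⟨SetRel.comp (A ∩ U') (B ∩ V'),
          mem_relFilterComp.mpr ⟨A ∩ U', 𝒰.inter_sets hA hU', B ∩ V',
            𝒱.inter_sets hB hV', Set.Subset.refl _⟩, ?_⟩
        rintro ⟨x, w⟩ ⟨y, ⟨a, ha1, ha2⟩, ⟨b, hb1, hb2⟩⟩
        obtain ⟨c, hc1, hc2⟩ : (a, b) ∈ SetRel.comp U' V' :=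
          hBA ⟨y, ha2.1, hb1.1⟩
        exact hsub ⟨c, hUU ⟨a, ha1.2, hc1⟩, hVV ⟨b, hc2, hb2.2⟩⟩
      · -- 𝒰 ≤ comp
        rintro s ⟨U, hUm, V, hVm, hsub⟩
        refine 𝒰.sets_of_superset hUm fun p hp => hsub ⟨p.2, hp, hV.1 V hVm p.2⟩
      · -- 𝒱 ≤ comp
        rintro s ⟨U, hUm, V, hVm, hsub⟩
        refine 𝒱.sets_of_superset hVm fun p hp => hsub ⟨p.1, hU.1 U hUm p.1, hp⟩
    · -- lower bound
      rintro 𝒲 ⟨hW, hUW, hVW⟩ s hs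
      obtain ⟨T, hT, hTT⟩ := hW.2.2 s hs
      exact mem_relFilterComp.mpr ⟨T, hUW hT, T, hVW hT, hTT⟩
end

section
/- If 𝒰 and 𝒱 are uniformities on a set S and 𝒱 ∘ 𝒰 ≤ 𝒰 ∘ 𝒱, then the filter 𝒰 ∘ 𝒱 is itself a uniformity (it satisfies the symmetry axiom and the square-refinement axiom). -/
/-- If `𝒰` and `𝒱` are uniformities on `S` and `𝒱 ∘ 𝒰 ≤ 𝒰 ∘ 𝒱`, then the
filter `𝒰 ∘ 𝒱` is itself a uniformity. -/
theorem stmt2 {S : Type*} (𝒰 𝒱 : Filter (S × S))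
    (hU : IsUniformity 𝒰) (hV : IsUniformity 𝒱)
    (h : relFilterComp 𝒱 𝒰 ≤ relFilterComp 𝒰 𝒱) :
    IsUniformity (relFilterComp 𝒰 𝒱) := by
  obtain ⟨hUd, hUs, hUc⟩ := hU
  obtain ⟨hVd, hVs, hVc⟩ := hV
  refine ⟨?_, ?_, ?_⟩
  · rintro W ⟨U, hU, V, hV, hsub⟩ x
    exact hsub ⟨x, hUd U hU x, hVd V hV x⟩
  · rintro W hW
    obtain ⟨V', hV', U', hU', hsub⟩ := h hW
    refine ⟨{p : S × S | (p.2, p.1) ∈ U'}, hUs U' hU',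
      {p : S × S | (p.2, p.1) ∈ V'}, hVs V' hV', ?_⟩
    rintro ⟨a, b⟩ ⟨z, h1, h2⟩
    exact hsub ⟨z, h2, h1⟩
  · rintro W ⟨U, hU, V, hV, hsub⟩
    obtain ⟨U₁, hU₁, hU₁c⟩ := hUc U hU
    obtain ⟨V₁, hV₁, hV₁c⟩ := hVc V hV
    obtain ⟨V₂, hV₂, U₂, hU₂, hswap⟩ :=
      h (⟨U₁, hU₁, V₁, hV₁, Set.Subset.rfl⟩ :
        SetRel.comp U₁ V₁ ∈ relFilterComp 𝒰 𝒱)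
    refine ⟨SetRel.comp (U₁ ∩ U₂) (V₁ ∩ V₂),
      ⟨U₁ ∩ U₂, 𝒰.inter_sets hU₁ hU₂, V₁ ∩ V₂, 𝒱.inter_sets hV₁ hV₂,
        Set.Subset.rfl⟩, ?_⟩
    rintro ⟨a, b⟩ ⟨m, ⟨x, hax, hxm⟩, y, hmy, hyb⟩
    have hxy : (x, y) ∈ SetRel.comp U₁ V₁ := hswap ⟨m, hxm.2, hmy.2⟩
    obtain ⟨z, hxz, hzy⟩ := hxy
    exact hsub ⟨z, hU₁c ⟨x, hax.1, hxz⟩, hV₁c ⟨y, hzy, hyb.1⟩⟩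
end
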